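/- For each d ≥ 1 define h_d(y) := ∫_{−1}^{1} |y + x|^{(5−d)/(d−2)} (1 − x²)^{(d+2)/2} dx for y ∈ (0,1), d ≥ 3. Then h_d is strictly increasing on (0,1) if d ∈ {3,4}, constant if d = 5, and strictly decreasing on (0,1) if d ≥ 6. -/

import Mathlib

open Real intervalIntegral

open Set MeasureTheory in
/-- Signed power: antiderivative of `|t|^(p-1)` (divided appropriately). -/
noncomputable def sPow (p u : ℝ) : ℝ := (max u 0) ^ p / p - (max (-u) 0) ^ p / p

lemma sPow_zero (p : ℝ) (hp : 0 < p) : sPow p 0 = 0 := by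
  simp [sPow, Real.zero_rpow hp.ne']

lemma sPow_of_nonneg {p u : ℝ} (hp : 0 < p) (hu : 0 ≤ u) : sPow p u = u ^ p / p := by
  rcases eq_or_lt_of_le hu with h | h
  · simp [sPow, ← h, Real.zero_rpow hp.ne']
  · rw [sPow, max_eq_left hu, max_eq_right (by linarith), Real.zero_rpow hp.ne']
    ring

lemma sPow_of_nonpos {p u : ℝ} (hp : 0 < p) (hu : u ≤ 0) : sPow p u = -((-u) ^ p / p) := by
  rw [sPow, max_eq_right hu, max_eq_left (by linarith), Real.zero_rpow hp.ne']
  ring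

lemma continuous_sPow (p : ℝ) (hp : 0 < p) : Continuous (sPow p) := by
  apply Continuous.sub <;>
  · apply Continuous.div_const
    apply Continuous.rpow_const
    · fun_prop
    · intro x
      right; exact hp.le

lemma hasDerivAt_sPow {p u : ℝ} (hp : 0 < p) (hu : u ≠ 0) :
    HasDerivAt (sPow p) (|u| ^ (p - 1)) u := by
  rcases lt_or_gt_of_ne hu with h | h
  · have : HasDerivAt (fun v : ℝ => -((-v) ^ p / p)) (|u| ^ (p - 1)) u := by
      have h1 : HasDerivAt (fun v : ℝ => -v) (-1) u := (hasDerivAt_id u).neg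
      have h2 : HasDerivAt (fun v : ℝ => (-v) ^ p) ((-1) * p * (-u) ^ (p - 1)) u :=
        HasDerivAt.rpow_const h1 (Or.inl (by simpa using h.ne))
      have := (h2.div_const p).neg
      refine this.congr_deriv ?_
      rw [abs_of_neg h]
      field_simp
    apply this.congr_of_eventuallyEq
    filter_upwards [eventually_lt_nhds h] with v hv
    exact sPow_of_nonpos hp hv.le
  · have : HasDerivAt (fun v : ℝ => v ^ p / p) (|u| ^ (p - 1)) u := by
      have h2 : HasDerivAt (fun v : ℝ => v ^ p) (p * u ^ (p - 1)) u :=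
        Real.hasDerivAt_rpow_const (Or.inl h.ne')
      have := h2.div_const p
      refine this.congr_deriv ?_
      rw [abs_of_pos h]
      field_simp
    apply this.congr_of_eventuallyEq
    filter_upwards [eventually_gt_nhds h] with v hv
    exact sPow_of_nonneg hp hv.le

lemma intervalIntegrable_abs_rpow {r : ℝ} (hr : -1 < r) (a b : ℝ) :
    IntervalIntegrable (fun t => |t| ^ r) MeasureTheory.volume a b := by
  suffices H : ∀ c : ℝ, 0 ≤ c → IntervalIntegrable (fun t => |t| ^ r) MeasureTheory.volume 0 c by
    have H' : ∀ c : ℝ, IntervalIntegrable (fun t => |t| ^ r) MeasureTheory.volume 0 c := by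
      intro c
      rcases le_total 0 c with h | h
      · exact H c h
      · rw [IntervalIntegrable.iff_comp_neg]
        simp only [abs_neg, neg_zero]
        exact (H (-c) (by linarith)).symm.symm
    exact (H' a).symm.trans (H' b)
  intro c hc
  have : IntervalIntegrable (fun t : ℝ => t ^ r) MeasureTheory.volume 0 c :=
    intervalIntegrable_rpow' hr
  rw [intervalIntegrable_iff] at this ⊢
  refine this.congr_fun ?_ measurableSet_uIoc
  intro t ht
  rw [Set.uIoc_of_le hc] at ht
  show t ^ r = |t| ^ r
  rw [abs_of_pos ht.1]


lemma integral_abs_rpow {p : ℝ} (hp : 0 < p) (a b : ℝ) :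
    ∫ t in a..b, |t| ^ (p - 1) = sPow p b - sPow p a := by
  have hr : -1 < p - 1 := by linarith
  have h0 : ∀ c : ℝ, ∫ t in (0:ℝ)..c, |t| ^ (p - 1) = sPow p c := by
    intro c
    rcases le_total 0 c with hc | hc
    · have : ∫ t in (0:ℝ)..c, |t| ^ (p - 1) = ∫ t in (0:ℝ)..c, t ^ (p - 1) := by
        apply integral_congr
        intro t ht
        rw [Set.uIcc_of_le hc] at ht
        rcases eq_or_lt_of_le ht.1 with h | h
        · simp [← h]
        · simp [abs_of_pos h]
      rw [this, integral_rpow (Or.inl hr), sPow_of_nonneg hp hc,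
        Real.zero_rpow (by linarith : p - 1 + 1 ≠ 0)]
      ring_nf
    · have e1 : ∫ t in (0:ℝ)..c, |t| ^ (p - 1) = ∫ t in (-c)..0, |t| ^ (p - 1) := by
        simpa [abs_neg] using
          intervalIntegral.integral_comp_neg (a := (0:ℝ)) (b := c) (f := fun t => |t| ^ (p - 1))
      have e2 : ∫ t in (-c)..(0:ℝ), |t| ^ (p - 1) = ∫ t in (-c)..(0:ℝ), t ^ (p - 1) := by
        apply integral_congr
        intro t ht
        rw [Set.uIcc_comm, Set.uIcc_of_le (by linarith : (0:ℝ) ≤ -c)] at ht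
        rcases eq_or_lt_of_le ht.1 with h | h
        · simp [← h]
        · simp [abs_of_pos h]
      rw [e1, e2, integral_rpow (Or.inl hr), sPow_of_nonpos hp hc,
        Real.zero_rpow (by linarith : p - 1 + 1 ≠ 0)]
      ring_nf
  rw [← integral_add_adjacent_intervals (a := a) (b := 0) (c := b)
    ((intervalIntegrable_abs_rpow hr a 0)) ((intervalIntegrable_abs_rpow hr 0 b)),
    integral_symm, h0, h0]
  ring


lemma intervalIntegrable_abs_rpow_shift {r : ℝ} (hr : -1 < r) (c a b : ℝ) :
    IntervalIntegrable (fun t => |t + c| ^ r) MeasureTheory.volume a b := by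
  have := (intervalIntegrable_abs_rpow hr (a + c) (b + c)).comp_add_right c
  simpa using this

lemma integral_abs_rpow_shift {p : ℝ} (hp : 0 < p) (c a b : ℝ) :
    ∫ t in a..b, |t + c| ^ (p - 1) = sPow p (b + c) - sPow p (a + c) := by
  rw [intervalIntegral.integral_comp_add_right (fun t => |t| ^ (p - 1)) c,
    integral_abs_rpow hp]

lemma sPow_key_diff {p : ℝ} (hp : 0 < p) (x z y : ℝ) :
    (sPow p (y + x) - sPow p (z + x)) - (sPow p (y - x) - sPow p (z - x)) =
      ∫ t in z..y, (|t + x| ^ (p - 1) - |t - x| ^ (p - 1)) := by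
  have hr : -1 < p - 1 := by linarith
  rw [intervalIntegral.integral_sub (intervalIntegrable_abs_rpow_shift hr x z y)
      (by simpa [sub_eq_add_neg] using intervalIntegrable_abs_rpow_shift hr (-x) z y),
    integral_abs_rpow_shift hp, show (fun t => |t - x| ^ (p - 1)) = fun t => |t + (-x)| ^ (p-1) by
      simp [sub_eq_add_neg], integral_abs_rpow_shift hp]
  ring_nf

lemma key_pos {p x z y : ℝ} (hp : 1 < p) (hx : 0 < x) (hz : 0 < z) (hzy : z < y) :
    sPow p (z + x) - sPow p (z - x) < sPow p (y + x) - sPow p (y - x) := by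
  have hp0 : 0 < p := by linarith
  have hr : -1 < p - 1 := by linarith
  have key := sPow_key_diff hp0 x z y
  have hpos : 0 < ∫ t in z..y, (|t + x| ^ (p - 1) - |t - x| ^ (p - 1)) := by
    apply intervalIntegral_pos_of_pos_on
    · exact (intervalIntegrable_abs_rpow_shift hr x z y).sub
        (by simpa [sub_eq_add_neg] using intervalIntegrable_abs_rpow_shift hr (-x) z y)
    · intro t ht
      have ht0 : 0 < t := hz.trans ht.1
      have h1 : |t - x| < |t + x| := by
        rw [abs_of_pos (by linarith : 0 < t + x), abs_lt]
        constructor <;> [linarith; linarith]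
      have := Real.rpow_lt_rpow (abs_nonneg _) h1 (by linarith : 0 < p - 1)
      linarith
    · exact hzy
  linarith [key]

lemma key_neg {p x z y : ℝ} (hp0 : 0 < p) (hp : p < 1) (hx : 0 < x) (hz : 0 < z)
    (hzy : z < y) :
    sPow p (y + x) - sPow p (y - x) < sPow p (z + x) - sPow p (z - x) := by
  have hr : -1 < p - 1 := by linarith
  have key := sPow_key_diff hp0 x z y
  set g : ℝ → ℝ := fun t => |t - x| ^ (p - 1) - |t + x| ^ (p - 1) with hg
  have hgint : ∀ a b : ℝ, IntervalIntegrable g MeasureTheory.volume a b := fun a b =>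
    ((by simpa [sub_eq_add_neg] using intervalIntegrable_abs_rpow_shift hr (-x) a b) :
      IntervalIntegrable (fun t => |t - x| ^ (p-1)) MeasureTheory.volume a b).sub
      (intervalIntegrable_abs_rpow_shift hr x a b)
  have hgpos : ∀ t : ℝ, 0 < t → t ≠ x → 0 < g t := by
    intro t ht0 htx
    have h1 : |t - x| < |t + x| := by
      rw [abs_of_pos (by linarith : 0 < t + x), abs_lt]
      constructor <;> [linarith; linarith]
    have h2 : 0 < |t - x| := abs_pos.mpr (sub_ne_zero.mpr htx)
    have := Real.rpow_lt_rpow_of_neg h2 h1 (by linarith : p - 1 < 0)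
    simp only [hg]
    linarith
  have hpos : 0 < ∫ t in z..y, g t := by
    rcases le_or_gt x z with hxz | hzx
    · exact intervalIntegral_pos_of_pos_on (hgint z y)
        (fun t ht => hgpos t (hz.trans ht.1) (by intro h; subst h; linarith [ht.1])) hzy
    · rcases le_or_gt y x with hyx | hxy
      · exact intervalIntegral_pos_of_pos_on (hgint z y)
          (fun t ht => hgpos t (hz.trans ht.1) (by intro h; subst h; linarith [ht.2])) hzy
      · rw [← integral_add_adjacent_intervals (hgint z x) (hgint x y)]
        have p1 : 0 < ∫ t in z..x, g t := intervalIntegral_pos_of_pos_on (hgint z x)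
          (fun t ht => hgpos t (hz.trans ht.1) (ne_of_lt ht.2)) hzx
        have p2 : 0 < ∫ t in x..y, g t := intervalIntegral_pos_of_pos_on (hgint x y)
          (fun t ht => hgpos t (hx.trans ht.1) (ne_of_gt ht.1)) hxy
        linarith
  have : (∫ t in z..y, (|t + x| ^ (p - 1) - |t - x| ^ (p - 1))) = -∫ t in z..y, g t := by
    rw [← intervalIntegral.integral_neg]
    congr 1
    funext t
    simp [hg]
  linarith [key, this ▸ key]


lemma ibp_main {p β y : ℝ} (hp : 0 < p) (hβ : 1 < β) (hy : y ∈ Set.Ioo (0:ℝ) 1) :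
    ∫ x in (-1:ℝ)..1, |y + x| ^ (p - 1) * (1 - x ^ 2) ^ β
      = ∫ x in (-1:ℝ)..1, (2 * β * x * (1 - x ^ 2) ^ (β - 1)) * sPow p (y + x) := by
  obtain ⟨hy0, hy1⟩ := hy
  have hr : -1 < p - 1 := by linarith
  set w : ℝ → ℝ := fun x => (1 - x ^ 2) ^ β with hw
  set w' : ℝ → ℝ := fun x => (-(2 * x)) * β * (1 - x ^ 2) ^ (β - 1) with hw'
  set f : ℝ → ℝ := fun x => sPow p (y + x) * w x with hf
  set A : ℝ → ℝ := fun x => |y + x| ^ (p - 1) * w x with hA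
  set B : ℝ → ℝ := fun x => sPow p (y + x) * w' x with hB
  have cont_w : Continuous w := by
    apply Continuous.rpow_const (by fun_prop)
    intro x; right; linarith
  have cont_w' : Continuous w' := by
    apply Continuous.mul (by fun_prop)
    apply Continuous.rpow_const (by fun_prop)
    intro x; right; linarith
  have cont_f : Continuous f :=
    ((continuous_sPow p hp).comp (by fun_prop)).mul cont_w
  have intA : ∀ a b : ℝ, IntervalIntegrable A MeasureTheory.volume a b := fun a b => by
    have : IntervalIntegrable (fun x => |x + y| ^ (p - 1)) MeasureTheory.volume a b :=
      intervalIntegrable_abs_rpow_shift hr y a b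
    have : IntervalIntegrable (fun x => |y + x| ^ (p - 1)) MeasureTheory.volume a b := by
      simpa [add_comm] using this
    exact this.mul_continuousOn cont_w.continuousOn
  have intB : ∀ a b : ℝ, IntervalIntegrable B MeasureTheory.volume a b := fun a b =>
    (((continuous_sPow p hp).comp (by fun_prop : Continuous fun x : ℝ => y + x)).mul
      cont_w').intervalIntegrable a b
  have hderiv : ∀ x : ℝ, x ∈ Set.Ioo (-1:ℝ) 1 → y + x ≠ 0 → HasDerivAt f (A x + B x) x := by
    intro x hx hyx
    have d1 : HasDerivAt (fun x => sPow p (y + x)) (|y + x| ^ (p - 1)) x := by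
      have := (hasDerivAt_sPow hp hyx).comp x ((hasDerivAt_id x).const_add y)
      exact this.congr_deriv (by simp)
    have d2 : HasDerivAt (fun x : ℝ => 1 - x ^ 2) (-(2 * x)) x := by
      have := (hasDerivAt_pow 2 x).const_sub 1
      simpa using this
    have hx2 : 1 - x ^ 2 ≠ 0 := by
      have : x ^ 2 < 1 := by
        rw [sq_lt_one_iff_abs_lt_one, abs_lt]
        exact ⟨hx.1, hx.2⟩
      linarith
    have d3 : HasDerivAt w (w' x) x := by
      have := HasDerivAt.rpow_const (p := β) d2 (Or.inl hx2)
      simpa [hw'] using this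
    exact d1.mul d3
  have hmy : -y ∈ Set.Ioo (-1:ℝ) 1 := ⟨by linarith, by linarith⟩
  have e1 : ∫ x in (-1:ℝ)..(-y), (A x + B x) = f (-y) - f (-1) := by
    apply integral_eq_sub_of_hasDeriv_right_of_le (by linarith)
      cont_f.continuousOn
    · intro x hx
      exact (hderiv x ⟨hx.1, by linarith [hx.2]⟩ (by intro h; nlinarith [hx.2])).hasDerivWithinAt
    · exact ((intA (-1) (-y)).add (intB (-1) (-y)))
  have e2 : ∫ x in (-y:ℝ)..1, (A x + B x) = f 1 - f (-y) := by
    apply integral_eq_sub_of_hasDeriv_right_of_le (by linarith)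
      cont_f.continuousOn
    · intro x hx
      exact (hderiv x ⟨by linarith [hx.1], hx.2⟩ (by intro h; nlinarith [hx.1])).hasDerivWithinAt
    · exact ((intA (-y) 1).add (intB (-y) 1))
  have etot : ∫ x in (-1:ℝ)..1, (A x + B x) = f 1 - f (-1) := by
    rw [← integral_add_adjacent_intervals ((intA (-1) (-y)).add (intB (-1) (-y)))
      ((intA (-y) 1).add (intB (-y) 1)), e1, e2]
    ring
  have hf1 : f 1 = 0 := by
    simp only [hf, hw]
    norm_num
    exact Or.inr (Real.zero_rpow (by linarith))
  have hfm1 : f (-1) = 0 := by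
    simp only [hf, hw]
    norm_num
    exact Or.inr (Real.zero_rpow (by linarith))
  rw [intervalIntegral.integral_add (intA (-1) 1) (intB (-1) 1), hf1, hfm1] at etot
  have : ∫ x in (-1:ℝ)..1, A x = -∫ x in (-1:ℝ)..1, B x := by linarith
  calc ∫ x in (-1:ℝ)..1, |y + x| ^ (p - 1) * (1 - x ^ 2) ^ β = ∫ x in (-1:ℝ)..1, A x := rfl
    _ = ∫ x in (-1:ℝ)..1, -B x := by rw [this, intervalIntegral.integral_neg]
    _ = ∫ x in (-1:ℝ)..1, (2 * β * x * (1 - x ^ 2) ^ (β - 1)) * sPow p (y + x) := by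
        apply integral_congr
        intro x _
        simp only [hB, hw']
        ring


lemma diff_eq {p β z y : ℝ} (hp : 0 < p) (hβ : 1 < β) (hz : z ∈ Set.Ioo (0:ℝ) 1)
    (hy : y ∈ Set.Ioo (0:ℝ) 1) :
    (∫ x in (-1:ℝ)..1, |y + x| ^ (p - 1) * (1 - x ^ 2) ^ β)
      - (∫ x in (-1:ℝ)..1, |z + x| ^ (p - 1) * (1 - x ^ 2) ^ β)
      = ∫ x in (0:ℝ)..1, (2 * β * x * (1 - x ^ 2) ^ (β - 1)) *
          ((sPow p (y + x) - sPow p (y - x)) - (sPow p (z + x) - sPow p (z - x))) := by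
  set q : ℝ → ℝ := fun x => 2 * β * x * (1 - x ^ 2) ^ (β - 1) with hq
  have cont_q : Continuous q := by
    apply Continuous.mul (by fun_prop)
    apply Continuous.rpow_const (by fun_prop)
    intro x; right; linarith
  have cont_s : ∀ c : ℝ, Continuous (fun x : ℝ => sPow p (c + x)) := fun c =>
    (continuous_sPow p hp).comp (by fun_prop)
  set F : ℝ → ℝ := fun x => q x * (sPow p (y + x) - sPow p (z + x)) with hF
  have cont_F : Continuous F := cont_q.mul ((cont_s y).sub (cont_s z))
  have step1 : (∫ x in (-1:ℝ)..1, |y + x| ^ (p - 1) * (1 - x ^ 2) ^ β)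
      - (∫ x in (-1:ℝ)..1, |z + x| ^ (p - 1) * (1 - x ^ 2) ^ β)
      = ∫ x in (-1:ℝ)..1, F x := by
    rw [ibp_main hp hβ hy, ibp_main hp hβ hz,
      ← intervalIntegral.integral_sub
        (f := fun x => 2 * β * x * (1 - x ^ 2) ^ (β - 1) * sPow p (y + x))
        (g := fun x => 2 * β * x * (1 - x ^ 2) ^ (β - 1) * sPow p (z + x))
        ((cont_q.mul (cont_s y)).intervalIntegrable _ _)
        ((cont_q.mul (cont_s z)).intervalIntegrable _ _)]
    apply integral_congr
    intro x _
    simp only [hF, hq]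
    ring
  have step2 : ∫ x in (-1:ℝ)..0, F x = ∫ x in (0:ℝ)..1, F (-x) := by
    rw [intervalIntegral.integral_comp_neg (a := (0:ℝ)) (b := 1) (f := F)]
    norm_num
  have cont_Fneg : Continuous (fun x : ℝ => F (-x)) := cont_F.comp continuous_neg
  have step3 : ∫ x in (-1:ℝ)..1, F x
      = ∫ x in (0:ℝ)..1, (F (-x) + F x) := by
    rw [← integral_add_adjacent_intervals (a := (-1:ℝ)) (b := 0) (c := 1)
      (cont_F.intervalIntegrable _ _) (cont_F.intervalIntegrable _ _), step2,
      intervalIntegral.integral_add (cont_Fneg.intervalIntegrable _ _)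
        (cont_F.intervalIntegrable _ _)]
  rw [step1, step3]
  apply integral_congr
  intro x _
  simp only [hF, hq, neg_sq, sub_eq_add_neg]
  ring


section signs

variable {p β z y : ℝ}

lemma cont_integrand (hp : 0 < p) (hβ : 1 < β) (z y : ℝ) :
    Continuous (fun x : ℝ => (2 * β * x * (1 - x ^ 2) ^ (β - 1)) *
      ((sPow p (y + x) - sPow p (y - x)) - (sPow p (z + x) - sPow p (z - x)))) := by
  have cq : Continuous (fun x : ℝ => 2 * β * x * (1 - x ^ 2) ^ (β - 1)) := by
    apply Continuous.mul (by fun_prop)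
    apply Continuous.rpow_const (by fun_prop)
    intro x; right; linarith
  have cs : ∀ c : ℝ, Continuous (fun x : ℝ => sPow p (c + x)) := fun c =>
    (continuous_sPow p hp).comp (by fun_prop)
  have cs' : ∀ c : ℝ, Continuous (fun x : ℝ => sPow p (c - x)) := fun c =>
    (continuous_sPow p hp).comp (by fun_prop)
  exact cq.mul (((cs y).sub (cs' y)).sub ((cs z).sub (cs' z)))

lemma qpos (hβ : 1 < β) {x : ℝ} (hx : x ∈ Set.Ioo (0:ℝ) 1) :
    0 < 2 * β * x * (1 - x ^ 2) ^ (β - 1) := by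
  have h1 : 0 < 1 - x ^ 2 := by nlinarith [hx.1, hx.2]
  have := Real.rpow_pos_of_pos h1 (β - 1)
  have := hx.1
  positivity

lemma mono_lt (hp : 1 < p) (hβ : 1 < β) (hz : z ∈ Set.Ioo (0:ℝ) 1)
    (hy : y ∈ Set.Ioo (0:ℝ) 1) (hzy : z < y) :
    (∫ x in (-1:ℝ)..1, |z + x| ^ (p - 1) * (1 - x ^ 2) ^ β)
      < ∫ x in (-1:ℝ)..1, |y + x| ^ (p - 1) * (1 - x ^ 2) ^ β := by
  have hp0 : 0 < p := by linarith
  rw [← sub_pos, diff_eq hp0 hβ hz hy]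
  apply intervalIntegral_pos_of_pos_on
    (((cont_integrand hp0 hβ z y)).intervalIntegrable _ _) _ one_pos
  intro x hx
  exact mul_pos (qpos hβ hx) (by linarith [key_pos hp hx.1 hz.1 hzy])

lemma anti_lt (hp0 : 0 < p) (hp : p < 1) (hβ : 1 < β) (hz : z ∈ Set.Ioo (0:ℝ) 1)
    (hy : y ∈ Set.Ioo (0:ℝ) 1) (hzy : z < y) :
    (∫ x in (-1:ℝ)..1, |y + x| ^ (p - 1) * (1 - x ^ 2) ^ β)
      < ∫ x in (-1:ℝ)..1, |z + x| ^ (p - 1) * (1 - x ^ 2) ^ β := by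
  rw [← sub_neg, diff_eq hp0 hβ hz hy, ← neg_pos, ← intervalIntegral.integral_neg]
  apply intervalIntegral_pos_of_pos_on
    (((cont_integrand hp0 hβ z y).neg).intervalIntegrable _ _) _ one_pos
  intro x hx
  have := key_neg hp0 hp hx.1 hz.1 hzy
  have hq := qpos hβ hx
  have : (2 * β * x * (1 - x ^ 2) ^ (β - 1)) *
      ((sPow p (y + x) - sPow p (y - x)) - (sPow p (z + x) - sPow p (z - x))) < 0 :=
    mul_neg_of_pos_of_neg hq (by linarith)
  simp only [Pi.neg_apply]
  linarith

end signs


/-- `h_d(y) = ∫_{−1}^1 |y+x|^{(5−d)/(d−2)} (1−x²)^{(d+2)/2} dx`. -/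
noncomputable def hFun (d : ℕ) (y : ℝ) : ℝ :=
  ∫ x in (-1:ℝ)..1, |y + x| ^ ((5 - (d:ℝ)) / ((d:ℝ) - 2)) * (1 - x ^ 2) ^ (((d:ℝ) + 2) / 2)

/-- For `d ≥ 3`, the function `h_d` is strictly increasing on `(0,1)` if `d ∈ {3,4}`,
constant on `(0,1)` if `d = 5`, and strictly decreasing on `(0,1)` if `d ≥ 6`. -/
theorem hFun_monotonicity (d : ℕ) (hd : 3 ≤ d) :
    ((d = 3 ∨ d = 4) → StrictMonoOn (hFun d) (Set.Ioo 0 1)) ∧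
    (d = 5 → ∀ y ∈ Set.Ioo (0:ℝ) 1, ∀ z ∈ Set.Ioo (0:ℝ) 1, hFun d y = hFun d z) ∧
    (6 ≤ d → StrictAntiOn (hFun d) (Set.Ioo 0 1)) := by
  have hd3 : (3:ℝ) ≤ (d:ℝ) := by exact_mod_cast hd
  have hd2 : ((d:ℝ) - 2) ≠ 0 := by linarith
  have hrep : ∀ u : ℝ, hFun d u =
      ∫ x in (-1:ℝ)..1, |u + x| ^ ((3 / ((d:ℝ) - 2)) - 1) * (1 - x ^ 2) ^ (((d:ℝ) + 2) / 2) := by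
    intro u
    unfold hFun
    congr 1
    funext x
    congr 2
    field_simp
    ring
  have hβ : 1 < ((d:ℝ) + 2) / 2 := by linarith
  refine ⟨?_, ?_, ?_⟩
  · rintro (rfl | rfl) <;>
    · intro z hz y hy hzy
      rw [hrep, hrep]
      apply mono_lt (by norm_num) (by norm_num) hz hy hzy
  · rintro rfl
    intro y _ z _
    have h0 : ∀ u : ℝ, hFun 5 u
        = ∫ x in (-1:ℝ)..1, (1 - x ^ 2) ^ ((((5:ℕ):ℝ) + 2) / 2) := by
      intro u
      unfold hFun
      apply integral_congr
      intro x _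
      norm_num
    rw [h0, h0]
  · intro hd6 z hz y hy hzy
    have hd6' : (6:ℝ) ≤ (d:ℝ) := by exact_mod_cast hd6
    rw [hrep, hrep]
    apply anti_lt (div_pos (by norm_num) (by linarith)) _ hβ hz hy hzy
    rw [div_lt_one (by linarith)]
    linarith
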